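/- arXiv:1706.03793 — 2 statements merged into one kernel-verified Lean document; each statement's English description precedes it below -/
import Mathlib

section
/- Fix an integer n > 1. The n-site hopper transfer matrix U(n) is unitary: U(n) · U(n)* = I, where U(n)* is the conjugate transpose. -/
open scoped Classical

/-- `efn x = exp(2πi x)`. -/
noncomputable def efn (x : ℝ) : ℂ := Complex.exp (2 * Real.pi * Complex.I * x)

/-- `ω_n`: a (2n)-th root of unity for even `n`, an n-th root of unity for odd `n`. -/
noncomputable def omegaN (n : ℕ) : ℂ :=
  if Even n then efn (1 / (2 * n)) else efn (1 / n)

/-- `n' = 2n` for even `n`, `n' = n` for odd `n`. -/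
def nPrime (n : ℕ) : ℕ := if Even n then 2 * n else n

/-- The `n`-site hopper transfer matrix `U(n)_{jk} = ω_n^{(j-k)^2}/√n`,
with `(j-k)^2` computed from the integer representatives in `{0,…,n-1}`. -/
noncomputable def hopperU (n : ℕ) [NeZero n] : Matrix (ZMod n) (ZMod n) ℂ :=
  fun j k => omegaN n ^ (((j.val : ℤ) - (k.val : ℤ)).natAbs ^ 2) / (Real.sqrt n : ℂ)

/-- The amplitude `a[γ] = ψ_{γ(0)} ∏_{t'=0}^{t-1} U(n)_{γ(t') γ(t'+1)}` of a `t`-path. -/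
noncomputable def amp (n : ℕ) [NeZero n] (ψ : ZMod n → ℂ) (t : ℕ)
    (γ : Fin (t + 1) → ZMod n) : ℂ :=
  ψ (γ 0) * ∏ k : Fin t, hopperU n (γ k.castSucc) (γ k.succ)

/-- The (un-reduced) phase exponent `Σ_{t'=0}^{t-1} (γ(t') - γ(t'+1))²` of a `t`-path,
differences computed via the integer representatives. -/
def phaseSum (n : ℕ) [NeZero n] (t : ℕ) (γ : Fin (t + 1) → ZMod n) : ℤ :=
  ∑ k : Fin t, (((γ k.castSucc).val : ℤ) - ((γ k.succ).val : ℤ)) ^ 2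

/-- Restriction of a `t`-path to a `t₀`-path (`t₀ ≤ t`). -/
def restrictPath (n : ℕ) {t₀ t : ℕ} (h : t₀ ≤ t) (γ : Fin (t + 1) → ZMod n) :
    Fin (t₀ + 1) → ZMod n :=
  fun k => γ (Fin.castLE (Nat.succ_le_succ h) k)

/-- `s^t_{ifp}(E)`: the number of `t`-paths in `E_t` starting at `i`, ending at `f`,
with phase exponent `p` (mod `n'`). -/
noncomputable def sCount (n : ℕ) [NeZero n] {t₀ : ℕ} (t : ℕ) (h : t₀ ≤ t)
    (E : Set (Fin (t₀ + 1) → ZMod n)) (i f : ZMod n) (p : ℕ) : ℕ :=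
  Set.ncard {γ : Fin (t + 1) → ZMod n |
    restrictPath n h γ ∈ E ∧ γ 0 = i ∧ γ (Fin.last t) = f ∧
    phaseSum n t γ % (nPrime n : ℤ) = (p : ℤ)}

/-- The quantum measure at time `t` of a set `F` of `t`-paths:
`μ_t(F) = Σ_f |Σ_{γ ∈ F, γ(t)=f} a[γ]|²`. -/
noncomputable def mu (n : ℕ) [NeZero n] (ψ : ZMod n → ℂ) (t : ℕ)
    (F : Set (Fin (t + 1) → ZMod n)) : ℝ :=
  ∑ f : ZMod n, (‖∑ γ : Fin (t + 1) → ZMod n,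
    if γ ∈ F ∧ γ (Fin.last t) = f then amp n ψ t γ else 0‖) ^ 2

lemma omegaN_eq (n : ℕ) :
    omegaN n = Complex.exp (((2 * Real.pi / (nPrime n) : ℝ) : ℂ) * Complex.I) := by
  unfold omegaN nPrime efn
  split_ifs <;> · congr 1; push_cast; ring

lemma norm_omegaN (n : ℕ) : ‖omegaN n‖ = 1 := by
  rw [omegaN_eq]
  exact Complex.norm_exp_ofReal_mul_I _

lemma omegaN_ne_zero (n : ℕ) : omegaN n ≠ 0 := by
  intro h
  have := norm_omegaN n
  rw [h] at this
  simp at this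

lemma zeta_prim (n : ℕ) (hn : n ≠ 0) : IsPrimitiveRoot (omegaN n ^ (2 : ℕ)) n := by
  have hnC : (n : ℂ) ≠ 0 := Nat.cast_ne_zero.mpr hn
  rcases Nat.even_or_odd n with he | ho
  · have : omegaN n ^ (2 : ℕ) = Complex.exp (2 * Real.pi * Complex.I / n) := by
      unfold omegaN efn
      rw [if_pos he, ← Complex.exp_nat_mul]
      congr 1
      push_cast
      field_simp
    rw [this]
    exact Complex.isPrimitiveRoot_exp n hn
  · have : omegaN n = Complex.exp (2 * Real.pi * Complex.I / n) := by
      unfold omegaN efn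
      rw [if_neg (Nat.not_even_iff_odd.mpr ho)]
      congr 1
      push_cast
      ring
    rw [this]
    exact (Complex.isPrimitiveRoot_exp n hn).pow_of_coprime 2 (Odd.coprime_two_left ho)

/-- The `n`-site hopper transfer matrix is unitary: `U(n)·U(n)* = 1`. -/
theorem stmt6 (n : ℕ) [NeZero n] (hn : 1 < n) :
    hopperU n * (hopperU n).conjTranspose = 1 := by
  have hn0 : n ≠ 0 := NeZero.ne n
  set ω := omegaN n with hωdef
  have hω0 : ω ≠ 0 := omegaN_ne_zero n
  have hprim : IsPrimitiveRoot (ω ^ (2 : ℕ)) n := zeta_prim n hn0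
  have hnR : (0 : ℝ) ≤ (n : ℝ) := by positivity
  have hsqrt : ((Real.sqrt n : ℝ) : ℂ) * ((Real.sqrt n : ℝ) : ℂ) = (n : ℂ) := by
    rw [← Complex.ofReal_mul, Real.mul_self_sqrt hnR]
    norm_cast
  have hnC : (n : ℂ) ≠ 0 := Nat.cast_ne_zero.mpr hn0
  have hconj : ∀ a : ℕ, star (ω ^ a) = ω ^ (-(a : ℤ)) := by
    intro a
    have h1 : ‖ω ^ a‖ = 1 := by rw [norm_pow, norm_omegaN, one_pow]
    rw [Complex.star_def, ← Complex.inv_eq_conj h1, zpow_neg, zpow_natCast]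
  have ha : ∀ e : ℤ, ((e.natAbs ^ 2 : ℕ) : ℤ) = e ^ 2 := by
    intro e; push_cast; exact sq_abs e
  have hsum : ∀ x : ℂ, ∑ m : ZMod n, x ^ (m.val) = ∑ i ∈ Finset.range n, x ^ i := by
    intro x
    refine Finset.sum_nbij' (fun m => m.val) (fun i => (i : ZMod n)) ?_ ?_ ?_ ?_ ?_
    · intro m _; exact Finset.mem_range.mpr (ZMod.val_lt m)
    · intro i _; exact Finset.mem_univ _
    · intro m _; exact ZMod.natCast_rightInverse m
    · intro i hi; exact ZMod.val_cast_of_lt (Finset.mem_range.mp hi)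
    · intro m _; rfl
  ext j k
  rw [Matrix.mul_apply, Matrix.one_apply]
  set jv : ℤ := (j.val : ℤ) with hjv
  set kv : ℤ := (k.val : ℤ) with hkv
  set d : ℤ := jv - kv with hd
  have key : ∀ m : ZMod n,
      hopperU n j m * (hopperU n).conjTranspose m k
        = ω ^ (d * (jv + kv)) * (ω ^ (-2 * d)) ^ (m.val) / n := by
    intro m
    rw [Matrix.conjTranspose_apply]
    unfold hopperU
    rw [← hωdef]
    set mv : ℤ := (m.val : ℤ) with hmv
    have hstar : star (ω ^ ((kv - mv).natAbs ^ 2) / ((Real.sqrt n : ℝ) : ℂ))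
        = ω ^ (-((kv - mv) ^ 2)) / ((Real.sqrt n : ℝ) : ℂ) := by
      rw [star_div₀, hconj, Complex.star_def, Complex.conj_ofReal, ha]
    rw [hstar, ← zpow_natCast ω ((jv - mv).natAbs ^ 2), ha]
    rw [div_mul_div_comm, hsqrt, ← zpow_add₀ hω0]
    rw [show (jv - mv) ^ 2 + -((kv - mv) ^ 2) = d * (jv + kv) + (-2 * d) * mv by
      rw [hd]; ring]
    rw [zpow_add₀ hω0, zpow_mul ω (-2 * d) ((m.val : ℕ) : ℤ), zpow_natCast]
  rw [Finset.sum_congr rfl (fun m _ => key m)]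
  rw [← Finset.sum_div, ← Finset.mul_sum, hsum]
  by_cases hjk : j = k
  · subst hjk
    have hd0 : d = 0 := by rw [hd, hjv, hkv]; ring
    rw [if_pos rfl, hd0]
    simp only [zero_mul, mul_zero, zpow_zero, one_pow, one_mul, Finset.sum_const,
      Finset.card_range, nsmul_eq_mul, mul_one]
    exact div_self hnC
  · rw [if_neg hjk]
    have hdne : d ≠ 0 := by
      rw [hd, hjv, hkv]
      intro h
      exact hjk (ZMod.val_injective n (by omega : j.val = k.val))
    have hndvd : ¬ (n : ℤ) ∣ d := by
      intro hdvd
      apply hdne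
      refine Int.eq_zero_of_abs_lt_dvd hdvd ?_
      have h1 : jv < n := by rw [hjv]; exact_mod_cast ZMod.val_lt j
      have h2 : kv < n := by rw [hkv]; exact_mod_cast ZMod.val_lt k
      have h3 : 0 ≤ jv := by rw [hjv]; positivity
      have h4 : 0 ≤ kv := by rw [hkv]; positivity
      rw [hd, abs_lt]
      omega
    set x : ℂ := ω ^ (-2 * d) with hx
    have hxz : x = (ω ^ (2 : ℕ)) ^ (-d : ℤ) := by
      rw [hx, ← zpow_natCast ω 2, ← zpow_mul]
      norm_num
    have hx1 : x ≠ 1 := by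
      rw [hxz]
      intro h
      rw [hprim.zpow_eq_one_iff_dvd, Int.dvd_neg] at h
      exact hndvd h
    have hxn : x ^ n = 1 := by
      rw [hxz, ← zpow_natCast _ n, ← zpow_mul, mul_comm, zpow_mul, zpow_natCast,
        hprim.pow_eq_one, one_zpow]
    rw [geom_sum_eq hx1 n, hxn, sub_self, zero_div, mul_zero, zero_div]
end

section
/- Fix an even integer n > 1, arbitrary initial amplitudes ψ : ℤ_n → ℂ, and a set E of t₀-paths (a time-finite event with defining data (t₀, E)). Let t ≥ t₀. If s^t_{ifp}(E) = s^t_{if(p+n)}(E) for all i, f ∈ ℤ_n and all p ∈ ℤ_{2n} (where p + n is taken mod 2n), then E is null: μ_t(E) = 0. -/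
open scoped Classical

/-- Natural-number version of the phase exponent. -/
def natPhase (n : ℕ) [NeZero n] (t : ℕ) (γ : Fin (t + 1) → ZMod n) : ℕ :=
  ∑ k : Fin t, (((γ k.castSucc).val : ℤ) - ((γ k.succ).val : ℤ)).natAbs ^ 2

lemma natPhase_cast (n : ℕ) [NeZero n] (t : ℕ) (γ : Fin (t + 1) → ZMod n) :
    (natPhase n t γ : ℤ) = phaseSum n t γ := by
  unfold natPhase phaseSum
  push_cast
  exact Finset.sum_congr rfl fun k _ => sq_abs _

lemma amp_eq (n : ℕ) [NeZero n] (ψ : ZMod n → ℂ) (t : ℕ) (γ : Fin (t + 1) → ZMod n) :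
    amp n ψ t γ = ψ (γ 0) * omegaN n ^ natPhase n t γ / (Real.sqrt n : ℂ) ^ t := by
  unfold amp hopperU natPhase
  rw [Finset.prod_div_distrib, Finset.prod_pow_eq_pow_sum, Finset.prod_const,
    Finset.card_univ, Fintype.card_fin, mul_div_assoc]

lemma omega_pow_n (n : ℕ) (hn : n ≠ 0) (hev : Even n) : omegaN n ^ n = -1 := by
  rw [omegaN, if_pos hev, efn, ← Complex.exp_nat_mul]
  rw [show ((n : ℂ) * (2 * ↑Real.pi * Complex.I * ↑(1 / (2 * (n:ℝ))))) = ↑Real.pi * Complex.I by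
    have hn' : (n : ℂ) ≠ 0 := Nat.cast_ne_zero.mpr hn
    push_cast
    field_simp]
  exact Complex.exp_pi_mul_I

lemma omega_pow_two_n (n : ℕ) (hn : n ≠ 0) (hev : Even n) : omegaN n ^ (2 * n) = 1 := by
  rw [mul_comm, pow_mul, omega_pow_n n hn hev]
  norm_num

/-- For even `n` and any initial amplitudes: if
`s^t_{ifp}(E) = s^t_{if(p+n)}(E)` for all `i, f ∈ ℤ_n` and all `p ∈ ℤ_{2n}`
(with `p + n` taken mod `2n`), then `E` is null: `μ_t(E) = 0`. -/
theorem stmt14 (n : ℕ) [NeZero n] (hn : 1 < n) (hev : Even n) (ψ : ZMod n → ℂ)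
    {t₀ : ℕ} (E : Set (Fin (t₀ + 1) → ZMod n)) (t : ℕ) (h : t₀ ≤ t)
    (hs : ∀ i f : ZMod n, ∀ p < 2 * n,
      sCount n t h E i f p = sCount n t h E i f ((p + n) % (2 * n))) :
    mu n ψ t {γ : Fin (t + 1) → ZMod n | restrictPath n h γ ∈ E} = 0 := by
  classical
  have hn0 : n ≠ 0 := NeZero.ne n
  have h2n0 : 0 < 2 * n := by omega
  set ω := omegaN n with hω
  have hω2n : ω ^ (2 * n) = 1 := omega_pow_two_n n hn0 hev
  have hωn : ω ^ n = -1 := omega_pow_n n hn0 hev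
  have hnp : nPrime n = 2 * n := if_pos hev
  set C : ℂ := (Real.sqrt n : ℂ) ^ t with hC
  have key : ∀ f : ZMod n,
      (∑ γ : Fin (t + 1) → ZMod n,
        if γ ∈ {γ : Fin (t + 1) → ZMod n | restrictPath n h γ ∈ E} ∧ γ (Fin.last t) = f
        then amp n ψ t γ else 0) = 0 := by
    intro f
    have hterm : ∀ γ : Fin (t + 1) → ZMod n,
        (if γ ∈ {γ : Fin (t + 1) → ZMod n | restrictPath n h γ ∈ E} ∧ γ (Fin.last t) = f
          then amp n ψ t γ else 0)
        = (if restrictPath n h γ ∈ E ∧ γ (Fin.last t) = f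
          then ψ (γ 0) * ω ^ (natPhase n t γ % (2 * n)) / C else 0) := by
      intro γ
      simp only [Set.mem_setOf_eq]
      split_ifs with hcond
      · rw [amp_eq, ← pow_eq_pow_mod _ hω2n]
      · rfl
    rw [Finset.sum_congr rfl fun γ _ => hterm γ]
    rw [← Finset.sum_fiberwise_of_maps_to
      (g := fun γ : Fin (t + 1) → ZMod n => (γ 0, natPhase n t γ % (2 * n)))
      (t := (Finset.univ : Finset (ZMod n)) ×ˢ Finset.range (2 * n))
      (fun γ _ => by
        simp only [Finset.mem_product, Finset.mem_univ, Finset.mem_range, true_and]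
        exact Nat.mod_lt _ h2n0)]
    rw [Finset.sum_product]
    apply Finset.sum_eq_zero
    intro i _
    have fib : ∀ p ∈ Finset.range (2 * n),
        (∑ γ ∈ Finset.filter
            (fun γ : Fin (t + 1) → ZMod n => (γ 0, natPhase n t γ % (2 * n)) = (i, p))
            Finset.univ,
          if restrictPath n h γ ∈ E ∧ γ (Fin.last t) = f
          then ψ (γ 0) * ω ^ (natPhase n t γ % (2 * n)) / C else 0)
        = (sCount n t h E i f p : ℂ) * (ψ i * ω ^ p / C) := by
      intro p _
      rw [← Finset.sum_filter]
      have hval : ∀ γ ∈ Finset.filter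
          (fun γ : Fin (t + 1) → ZMod n => restrictPath n h γ ∈ E ∧ γ (Fin.last t) = f)
          (Finset.filter
            (fun γ : Fin (t + 1) → ZMod n => (γ 0, natPhase n t γ % (2 * n)) = (i, p))
            Finset.univ),
          ψ (γ 0) * ω ^ (natPhase n t γ % (2 * n)) / C = ψ i * ω ^ p / C := by
        intro γ hγ
        simp only [Finset.mem_filter, Finset.mem_univ, true_and, Prod.mk.injEq] at hγ
        rw [hγ.1.1, hγ.1.2]
      rw [Finset.sum_congr rfl hval, Finset.sum_const, nsmul_eq_mul]
      congr 1
      rw [sCount, Set.ncard_eq_toFinset_card', Set.toFinset_setOf]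
      norm_cast
      congr 1
      ext γ
      simp only [Finset.mem_filter, Finset.mem_univ, true_and, Prod.mk.injEq,
        Set.mem_setOf_eq, hnp]
      constructor
      · rintro ⟨⟨h0, hph⟩, hE, hf⟩
        refine ⟨hE, h0, hf, ?_⟩
        rw [← natPhase_cast, ← Int.natCast_mod, hph]
      · rintro ⟨hE, h0, hf, hph⟩
        refine ⟨⟨h0, ?_⟩, hE, hf⟩
        rw [← natPhase_cast, ← Int.natCast_mod] at hph
        exact_mod_cast hph
    rw [Finset.sum_congr rfl fib]
    rw [two_mul, Finset.sum_range_add, ← Finset.sum_add_distrib]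
    apply Finset.sum_eq_zero
    intro p hp
    rw [Finset.mem_range] at hp
    have hs' : sCount n t h E i f (n + p) = sCount n t h E i f p := by
      have := hs i f p (by omega)
      rw [Nat.mod_eq_of_lt (by omega)] at this
      rw [Nat.add_comm n p]
      exact this.symm
    rw [hs', pow_add, hωn]
    ring
  unfold mu
  apply Finset.sum_eq_zero
  intro f _
  rw [key f]
  simp
end
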